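/- For all integers n ≥ 0 and all odd integers t ≥ 1, the number of t-colored overpartitions of 8n+5 is divisible by 8, i.e., p̄_{-t}(8n+5) ≡ 0 (mod 8). -/

import Mathlib

open scoped Classical

/-- The infinite product `∏_{k ≥ 0} f k` of formal power series, in the situation where,
for each fixed power of `q`, only finitely many factors contribute: the coefficient of
`q^n` is read off from the product of the factors `f 0, …, f n` (all later factors are
assumed to be `1 + O(q^{n+1})`). -/
noncomputable def seriesProd (f : ℕ → PowerSeries ℤ) : PowerSeries ℤ :=
  PowerSeries.mk fun n => PowerSeries.coeff n (∏ k ∈ Finset.range (n + 1), f k)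

/-- The generating function `∏_{k ≥ 1} (1 - q^{2k})^t / (1 - q^k)^{2t}`
for `t`-colored overpartitions. -/
noncomputable def overGF (t : ℕ) : PowerSeries ℤ :=
  seriesProd fun k =>
    (1 - (PowerSeries.X : PowerSeries ℤ) ^ (2 * (k + 1))) ^ t *
      (PowerSeries.invOfUnit (1 - (PowerSeries.X : PowerSeries ℤ) ^ (k + 1)) 1) ^ (2 * t)

/-- `p̄_{-t}(n)`, the number of `t`-colored overpartitions of `n`: the coefficient of `q^n`
in `∏_{k ≥ 1} (1 - q^{2k})^t / (1 - q^k)^{2t}`. -/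
noncomputable def pbar (t n : ℕ) : ℤ :=
  PowerSeries.coeff n (overGF t)

/-- Ramanujan's theta function `φ(q^m) = 1 + 2 ∑_{k ≥ 1} q^{m k²}`. -/
noncomputable def phi (m : ℕ) : PowerSeries ℤ :=
  PowerSeries.mk fun n =>
    if n = 0 then 1 else if ∃ k : ℕ, 0 < k ∧ n = m * k ^ 2 then 2 else 0

/-- `φ(-q) = 1 + 2 ∑_{k ≥ 1} (-1)^{k²} q^{k²}` (note `(-1)^{k²} = (-1)^n` at `n = k²`). -/
noncomputable def phiNeg : PowerSeries ℤ :=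
  PowerSeries.mk fun n =>
    if n = 0 then 1 else if ∃ k : ℕ, 0 < k ∧ n = k ^ 2 then 2 * (-1) ^ n else 0

/-- Ramanujan's theta function `ψ(q^m) = ∑_{k ≥ 0} q^{m·k(k+1)/2}`. -/
noncomputable def psi (m : ℕ) : PowerSeries ℤ :=
  PowerSeries.mk fun n => if ∃ k : ℕ, 2 * n = m * (k * (k + 1)) then 1 else 0

/-- `f_r = ∏_{j ≥ 1} (1 - q^{r j})`. -/
noncomputable def fr (r : ℕ) : PowerSeries ℤ :=
  seriesProd fun j => 1 - (PowerSeries.X : PowerSeries ℤ) ^ (r * (j + 1))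



open PowerSeries Finset


open PowerSeries Finset

abbrev PS := PowerSeries ℤ

def Tail (f : ℕ → PS) : Prop := ∀ k, (X : PS)^(k+1) ∣ (f k - 1)

lemma dv_mul {s : ℕ} {A B : PS} (hA : (X:PS)^s ∣ A - 1) (hB : (X:PS)^s ∣ B - 1) :
    (X:PS)^s ∣ A * B - 1 := by
  have h : A * B - 1 = (A - 1) * B + (B - 1) := by ring
  rw [h]; exact dvd_add (hA.mul_right B) hB

lemma dv_pow {s : ℕ} {A : PS} (hA : (X:PS)^s ∣ A - 1) (t : ℕ) :
    (X:PS)^s ∣ A ^ t - 1 := by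
  induction t with
  | zero => simp
  | succ t ih => rw [pow_succ]; exact dv_mul ih hA

lemma dv_mono {s s' : ℕ} (h : s' ≤ s) {A : PS} (hA : (X:PS)^s ∣ A - 1) :
    (X:PS)^s' ∣ A - 1 := dvd_trans (pow_dvd_pow _ h) hA

lemma coeff_eq_of_dvd {s N : ℕ} {A B : PS} (h : (X:PS)^s ∣ A - B) (hN : N < s) :
    PowerSeries.coeff N A = PowerSeries.coeff N B := by
  have h1 := (PowerSeries.X_pow_dvd_iff.mp h) N hN
  have h2 : PowerSeries.coeff N A - PowerSeries.coeff N B = 0 := by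
    rw [← map_sub]; exact h1
  linarith

lemma coeff_mul_drop {N m : ℕ} (hm : N < m) {A B : PS} (hB : (X:PS)^m ∣ B - 1) :
    PowerSeries.coeff N (A * B) = PowerSeries.coeff N A := by
  have h : (X:PS)^m ∣ A * B - A := by
    have : A * B - A = A * (B - 1) := by ring
    rw [this]; exact hB.mul_left A
  exact coeff_eq_of_dvd h hm

lemma coeff_seriesProd (f : ℕ → PS) (N : ℕ) :
    PowerSeries.coeff N (seriesProd f) =
      PowerSeries.coeff N (∏ k ∈ Finset.range (N + 1), f k) := by
  simp [seriesProd]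

lemma coeff_prod_range (f : ℕ → PS) (hf : Tail f) {N m : ℕ} (hm : N + 1 ≤ m) :
    PowerSeries.coeff N (∏ k ∈ Finset.range m, f k) =
      PowerSeries.coeff N (seriesProd f) := by
  induction m, hm using Nat.le_induction with
  | base => rw [coeff_seriesProd]
  | succ m hm ih =>
      rw [Finset.prod_range_succ, coeff_mul_drop (by omega) (hf m), ih]

lemma coeff_mul_congr {N : ℕ} {A B B' : PS} (h : ∀ i ≤ N, PowerSeries.coeff i B = PowerSeries.coeff i B') :
    PowerSeries.coeff N (A * B) = PowerSeries.coeff N (A * B') := by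
  rw [PowerSeries.coeff_mul, PowerSeries.coeff_mul]
  refine Finset.sum_congr rfl fun p hp => ?_
  rw [Finset.HasAntidiagonal.mem_antidiagonal] at hp
  rw [h p.2 (by omega)]

lemma coeff_mul_seriesProd {N : ℕ} (A : PS) (f : ℕ → PS) (hf : Tail f) {m : ℕ} (hm : N + 1 ≤ m) :
    PowerSeries.coeff N (A * seriesProd f) =
      PowerSeries.coeff N (A * ∏ k ∈ Finset.range m, f k) := by
  exact coeff_mul_congr fun i hi => by
    rw [coeff_prod_range f hf (le_trans (by omega) hm)]

lemma seriesProd_mul (f g : ℕ → PS) (hf : Tail f) (hg : Tail g) :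
    seriesProd f * seriesProd g = seriesProd (fun k => f k * g k) := by
  ext N
  rw [PowerSeries.coeff_mul]
  have : ∀ p : ℕ × ℕ, p ∈ Finset.HasAntidiagonal.antidiagonal N →
      PowerSeries.coeff p.1 (seriesProd f) * PowerSeries.coeff p.2 (seriesProd g) =
      PowerSeries.coeff p.1 (∏ k ∈ Finset.range (N+1), f k) *
        PowerSeries.coeff p.2 (∏ k ∈ Finset.range (N+1), g k) := by
    intro p hp
    rw [Finset.HasAntidiagonal.mem_antidiagonal] at hp
    rw [← coeff_prod_range f hf (m := N+1) (by omega), ← coeff_prod_range g hg (m := N+1) (by omega)]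
  rw [Finset.sum_congr rfl this, ← PowerSeries.coeff_mul, ← Finset.prod_mul_distrib,
    coeff_seriesProd]

lemma seriesProd_one : seriesProd (fun _ => (1 : PS)) = 1 := by
  ext N
  rw [coeff_seriesProd, Finset.prod_const_one]

lemma Tail.mul {f g : ℕ → PS} (hf : Tail f) (hg : Tail g) : Tail (fun k => f k * g k) :=
  fun k => dv_mul (hf k) (hg k)

lemma Tail.pow {f : ℕ → PS} (hf : Tail f) (t : ℕ) : Tail (fun k => f k ^ t) :=
  fun k => dv_pow (hf k) t

lemma seriesProd_pow (f : ℕ → PS) (hf : Tail f) (t : ℕ) :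
    seriesProd (fun k => f k ^ t) = (seriesProd f) ^ t := by
  induction t with
  | zero => simpa using seriesProd_one
  | succ t ih =>
      have : (fun k => f k ^ (t+1)) = fun k => f k ^ t * f k := by
        funext k; rw [pow_succ]
      rw [this, ← seriesProd_mul _ _ (hf.pow t) hf, ih, pow_succ]

lemma prod_pair (v : ℕ → PS) (m : ℕ) :
    ∏ k ∈ Finset.range m, (v (2*k) * v (2*k+1)) = ∏ j ∈ Finset.range (2*m), v j := by
  induction m with
  | zero => simp
  | succ m ih =>
      rw [Finset.prod_range_succ, ih, show 2*(m+1) = 2*m+1+1 by ring,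
        Finset.prod_range_succ, Finset.prod_range_succ, mul_assoc]

lemma seriesProd_pair (v : ℕ → PS) (hv : Tail v) :
    seriesProd (fun k => v (2*k) * v (2*k+1)) = seriesProd v := by
  ext N
  rw [coeff_seriesProd, prod_pair, coeff_prod_range v hv (by omega)]


open PowerSeries Finset

noncomputable def GB : ℕ → ℕ → PS
  | _, 0 => 1
  | 0, _+1 => 0
  | n+1, k+1 => GB n (k+1) + (X:PS)^(2*(n-k)) * GB n k

lemma GB_zero_right (n : ℕ) : GB n 0 = 1 := by cases n <;> rfl

lemma GB_zero_succ (k : ℕ) : GB 0 (k+1) = 0 := rfl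

lemma GB_succ_succ (n k : ℕ) :
    GB (n+1) (k+1) = GB n (k+1) + (X:PS)^(2*(n-k)) * GB n k := rfl

lemma GB_eq_zero : ∀ {n k : ℕ}, n < k → GB n k = 0 := by
  intro n
  induction n with
  | zero => intro k hk; match k, hk with | k+1, _ => rfl
  | succ n ih =>
      intro k hk
      match k, hk with
      | k+1, hk =>
          rw [GB_succ_succ, ih (by omega), ih (by omega), mul_zero, add_zero]

lemma GB_self (n : ℕ) : GB n n = 1 := by
  induction n with
  | zero => rfl
  | succ n ih => rw [GB_succ_succ, GB_eq_zero (by omega), ih, zero_add, Nat.sub_self,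
      mul_zero, pow_zero, one_mul]

lemma GB_one (m : ℕ) : GB m 1 = ∑ i ∈ Finset.range m, (X:PS)^(2*i) := by
  induction m with
  | zero => rfl
  | succ m ih =>
      rw [GB_succ_succ, ih, GB_zero_right, Finset.sum_range_succ, mul_one, Nat.sub_zero]

lemma GB_pascalB : ∀ (n k : ℕ), GB (n+1) (k+1) = (X:PS)^(2*(k+1)) * GB n (k+1) + GB n k := by
  intro n
  induction n with
  | zero =>
      intro k
      cases k with
      | zero => rw [GB_succ_succ]; simp [GB_zero_succ, GB_zero_right]
      | succ k => rw [GB_succ_succ]; simp [GB_zero_succ]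
  | succ n ih =>
      intro k
      cases k with
      | zero =>
          rw [GB_succ_succ, GB_zero_right, GB_one, mul_one, Nat.sub_zero,
            ← Finset.sum_range_succ (fun i => (X:PS)^(2*i)) (n+1),
            Finset.sum_range_succ' (fun i => (X:PS)^(2*i)) (n+1), Finset.mul_sum]
          simp only [mul_zero, pow_zero]
          congr 1
          exact Finset.sum_congr rfl fun i _ => by rw [← pow_add]; congr 1; omega
      | succ k =>
          conv_lhs => rw [GB_succ_succ, ih (k+1), ih k]
          conv_rhs => rw [GB_succ_succ n (k+1), GB_succ_succ n k]
          have hE : 2*(n+1-(k+1)) = 2*(n-k) := by omega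
          rw [hE]
          have e1 : (X:PS)^(2*(n-k)) * ((X:PS)^(2*(k+1)) * GB n (k+1)) =
              (X:PS)^(2*(k+1+1)) * ((X:PS)^(2*(n-(k+1))) * GB n (k+1)) := by
            rcases Nat.lt_or_ge k n with h | h
            · rw [← mul_assoc, ← pow_add, ← mul_assoc, ← pow_add]
              have : 2*(n-k) + 2*(k+1) = 2*(k+1+1) + 2*(n-(k+1)) := by omega
              rw [this]
            · rw [GB_eq_zero (show n < k+1 by omega)]; ring
          linear_combination e1

noncomputable def Epoly (k : ℕ) : PS := ∏ i ∈ Finset.range k, (1 - (X:PS)^(2*i+2))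

lemma GB_mul_E : ∀ (n k : ℕ), k ≤ n →
    GB n k * Epoly k = ∏ i ∈ Finset.range k, (1 - (X:PS)^(2*(n-k+i+1))) := by
  intro n
  induction n with
  | zero =>
      intro k hk
      match k, hk with
      | 0, _ => simp [Epoly, GB_zero_right]
  | succ n ih =>
      intro k hk
      cases k with
      | zero => simp [Epoly, GB_zero_right]
      | succ k =>
          have hEp : Epoly (k+1) = Epoly k * (1 - (X:PS)^(2*k+2)) := Finset.prod_range_succ _ _
          rcases Nat.lt_or_ge k n with h | h
          · -- k+1 ≤ n
            have IH1 := ih (k+1) (by omega)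
            have IH0 := ih k (by omega)
            have IH0' : GB n k * Epoly (k+1) =
                (∏ i ∈ Finset.range k, (1 - (X:PS)^(2*(n-k+i+1)))) * (1 - (X:PS)^(2*k+2)) := by
              rw [hEp, ← mul_assoc, IH0]
            rw [GB_succ_succ, add_mul, IH1]
            have hpeel0 : ∏ i ∈ Finset.range (k+1), (1 - (X:PS)^(2*(n-(k+1)+i+1)))
                = (1 - (X:PS)^(2*(n-k))) * ∏ i ∈ Finset.range k, (1 - (X:PS)^(2*(n-k+i+1))) := by
              rw [Finset.prod_range_succ']
              have h0 : 2*(n-(k+1)+0+1) = 2*(n-k) := by omega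
              have hs : ∀ i, 2*(n-(k+1)+(i+1)+1) = 2*(n-k+i+1) := by intro i; omega
              rw [h0, mul_comm]
              congr 1
              exact Finset.prod_congr rfl fun i _ => by rw [hs i]
            have hpeelT : ∏ i ∈ Finset.range (k+1), (1 - (X:PS)^(2*(n+1-(k+1)+i+1)))
                = (∏ i ∈ Finset.range k, (1 - (X:PS)^(2*(n-k+i+1)))) * (1 - (X:PS)^(2*(n+1))) := by
              rw [Finset.prod_range_succ]
              have ht : 2*(n+1-(k+1)+k+1) = 2*(n+1) := by omega
              have hs : ∀ i, 2*(n+1-(k+1)+i+1) = 2*(n-k+i+1) := by intro i; omega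
              rw [ht]
              congr 1
              exact Finset.prod_congr rfl fun i _ => by rw [hs i]
            rw [hpeel0, hpeelT, mul_assoc, IH0']
            set Q := ∏ i ∈ Finset.range k, (1 - (X:PS)^(2*(n-k+i+1))) with hQ
            have key : (X:PS)^(2*(n-k)) * (X:PS)^(2*k+2) = (X:PS)^(2*(n+1)) := by
              rw [← pow_add]; congr 1; omega
            linear_combination (-Q) * key
          · -- k = n
            have hk' : k = n := by omega
            subst hk'
            rw [GB_succ_succ, GB_eq_zero (show k < k+1 by omega), GB_self, zero_add,
              Nat.sub_self, pow_zero, mul_one, one_mul]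
            have : ∀ i, 2*(k+1-(k+1)+i+1) = 2*i+2 := by intro i; omega
            rw [hEp]
            rw [show ∏ i ∈ Finset.range (k+1), (1 - (X:PS)^(2*(k+1-(k+1)+i+1)))
                = ∏ i ∈ Finset.range (k+1), (1 - (X:PS)^(2*i+2)) from
              Finset.prod_congr rfl fun i _ => by rw [this i]]
            rw [Epoly, Finset.prod_range_succ]

lemma dv_prod_range {s k : ℕ} {F : ℕ → PS} (h : ∀ i < k, (X:PS)^s ∣ F i - 1) :
    (X:PS)^s ∣ (∏ i ∈ Finset.range k, F i) - 1 := by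
  induction k with
  | zero => simp
  | succ k ih =>
      rw [Finset.prod_range_succ]
      exact dv_mul (ih fun i hi => h i (by omega)) (h k (by omega))

lemma dv_one_sub_pow {s e : ℕ} (h : s ≤ e) : (X:PS)^s ∣ (1 - (X:PS)^e) - 1 := by
  have : (1 - (X:PS)^e) - 1 = -(X^e) := by ring
  rw [this]
  exact dvd_neg.mpr (pow_dvd_pow _ h)


open PowerSeries Finset

def Ee (n i : ℕ) : ℕ := (((i:ℤ) - n).natAbs)^2

lemma Ee_cast (n i : ℕ) : (Ee n i : ℤ) = ((i:ℤ) - n)^2 := by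
  unfold Ee
  rw [pow_two, pow_two, Nat.cast_mul, Int.natAbs_mul_self']

lemma Ee_eq_of_int {n i n' i' : ℕ} (h : (((i:ℤ) - n))^2 = (((i':ℤ) - n'))^2) :
    Ee n i = Ee n' i' := by
  have h2 : (Ee n i : ℤ) = (Ee n' i' : ℤ) := by rw [Ee_cast, Ee_cast, h]
  exact_mod_cast h2

lemma qpow_eq {a b : ℕ} (h : a = b) : (X:PS)^a = (X:PS)^b := by rw [h]

lemma Ee_pow_eq {n i n' i' c c' : ℕ}
    (h : ((i:ℤ) - n)^2 + c = ((i':ℤ) - n')^2 + c') :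
    (X:PS)^(Ee n i) * (X:PS)^c = (X:PS)^(Ee n' i') * (X:PS)^c' := by
  rw [← pow_add, ← pow_add]
  apply qpow_eq
  have h2 : ((Ee n i : ℤ)) + c = (Ee n' i' : ℤ) + c' := by rw [Ee_cast, Ee_cast]; exact_mod_cast h
  exact_mod_cast h2

noncomputable def Pn (n : ℕ) : Polynomial PS :=
  ∏ k ∈ Finset.range n, ((Polynomial.C ((X:PS)^(2*k+1)) + Polynomial.X) *
    (1 + Polynomial.C ((X:PS)^(2*k+1)) * Polynomial.X))

lemma GBdec (n k : ℕ) :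
    GB (2*n+2) (k+2) = (X:PS)^(2*(k+2)) * GB (2*n) (k+2)
      + (1 + (X:PS)^(2*(2*n+1))) * GB (2*n) (k+1) + (X:PS)^(2*(2*n-k)) * GB (2*n) k := by
  have hA : GB (2*n+2) (k+2) = GB (2*n+1) (k+2) + (X:PS)^(2*(2*n+1-(k+1))) * GB (2*n+1) (k+1) :=
    GB_succ_succ (2*n+1) (k+1)
  have hB1 : GB (2*n+1) (k+1+1) = (X:PS)^(2*(k+1+1)) * GB (2*n) (k+1+1) + GB (2*n) (k+1) :=
    GB_pascalB (2*n) (k+1)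
  have hB0 : GB (2*n+1) (k+1) = (X:PS)^(2*(k+1)) * GB (2*n) (k+1) + GB (2*n) k :=
    GB_pascalB (2*n) k
  rcases Nat.lt_or_ge (2*n) (k+1) with h | h
  · have z1 : GB (2*n) (k+1) = 0 := GB_eq_zero h
    have z2 : GB (2*n) (k+1+1) = 0 := GB_eq_zero (by omega)
    have z3 : GB (2*n) (k+2) = 0 := GB_eq_zero (by omega)
    rw [hA, hB1, hB0, z1, z2]
    rw [show 2*(2*n+1-(k+1)) = 2*(2*n-k) by omega]
    ring
  · have key : (X:PS)^(2*(2*n+1-(k+1))) * (X:PS)^(2*(k+1)) = (X:PS)^(2*(2*n+1)) := by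
      rw [← pow_add]; apply qpow_eq; omega
    have hexp2 : 2*(2*n+1-(k+1)) = 2*(2*n-k) := by omega
    rw [hA, hB1, hB0]
    rw [hexp2] at key ⊢
    have h22 : GB (2*n) (k+1+1) = GB (2*n) (k+2) := rfl
    rw [h22]
    linear_combination (GB (2*n) (k+1)) * key

lemma Pn_coeff : ∀ (n j : ℕ), (Pn n).coeff j = GB (2*n) j * (X:PS)^(Ee n j) := by
  intro n
  induction n with
  | zero =>
      intro j
      rw [Pn, Finset.range_zero, Finset.prod_empty, Polynomial.coeff_one]
      cases j with
      | zero => simp [GB_zero_right, Ee]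
      | succ j => simp [GB_zero_succ]
  | succ n ih =>
      have hstep : Pn (n+1) = Pn n * Polynomial.C ((X:PS)^(2*n+1))
          + (Pn n * (1 + Polynomial.C (((X:PS)^(2*n+1))^2))) * Polynomial.X^1
          + (Pn n * Polynomial.C ((X:PS)^(2*n+1))) * Polynomial.X^2 := by
        rw [Pn, Finset.prod_range_succ, ← Pn]
        simp only [map_pow]
        ring
      intro j
      rw [hstep, Polynomial.coeff_add, Polynomial.coeff_add, Polynomial.coeff_mul_C,
        Polynomial.coeff_mul_X_pow', Polynomial.coeff_mul_X_pow', ih j]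
      have hco : ∀ i, (Pn n * (1 + Polynomial.C (((X:PS)^(2*n+1))^2))).coeff i
          = GB (2*n) i * (X:PS)^(Ee n i) * (1 + ((X:PS)^(2*n+1))^2) := by
        intro i
        rw [mul_add, mul_one, Polynomial.coeff_add, Polynomial.coeff_mul_C, ih]
        ring
      have hco2 : ∀ i, (Pn n * Polynomial.C ((X:PS)^(2*n+1))).coeff i
          = GB (2*n) i * (X:PS)^(Ee n i) * (X:PS)^(2*n+1) := by
        intro i
        rw [Polynomial.coeff_mul_C, ih]
      have ha : (1 + ((X:PS)^(2*n+1))^2) = (1 + (X:PS)^(2*(2*n+1))) := by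
        rw [← pow_mul]
        rw [show (2*n+1)*2 = 2*(2*n+1) by ring]
      simp only [hco, hco2, ha]
      have h2n2 : 2*(n+1) = 2*n+2 := by ring
      rw [h2n2]
      cases j with
      | zero =>
          rw [if_neg (by omega : ¬ (1:ℕ) ≤ 0), if_neg (by omega : ¬ (2:ℕ) ≤ 0), add_zero,
            add_zero, GB_zero_right, GB_zero_right, one_mul, one_mul, ← pow_add]
          apply qpow_eq
          have h2 : ((Ee n 0 : ℤ)) + (2*n+1 : ℕ) = (Ee (n+1) 0 : ℤ) := by
            rw [Ee_cast, Ee_cast]; push_cast; ring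
          exact_mod_cast h2
      | succ j =>
        cases j with
        | zero =>
            rw [if_pos (by omega : (1:ℕ) ≤ 1), if_neg (by omega : ¬ (2:ℕ) ≤ 1), add_zero]
            have e1 : GB (2*n+2) 1 = GB (2*n+1) 1 + (X:PS)^(2*(2*n+1-0)) * GB (2*n+1) 0 :=
              GB_succ_succ (2*n+1) 0
            have e2 : GB (2*n+1) (0+1) = (X:PS)^(2*(0+1)) * GB (2*n) (0+1) + GB (2*n) 0 :=
              GB_pascalB (2*n) 0
            simp only [Nat.sub_zero, Nat.zero_add, mul_one, GB_zero_right] at e1 e2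
            rw [e1, e2, GB_zero_right]
            have hx1 : (X:PS)^(Ee n 1) * (X:PS)^(2*n+1) = (X:PS)^(Ee (n+1) 1) * (X:PS)^(2*1) := by
              apply Ee_pow_eq; push_cast; ring
            have hx0 : (X:PS)^(Ee n 0) = (X:PS)^(Ee (n+1) 1) := by
              apply qpow_eq; apply Ee_eq_of_int; push_cast; ring
            linear_combination (GB (2*n) 1) * hx1 + (1 + (X:PS)^(2*(2*n+1))) * hx0
        | succ k =>
            rw [if_pos (by omega : (1:ℕ) ≤ k+1+1), if_pos (by omega : (2:ℕ) ≤ k+1+1)]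
            have hs1 : k+1+1-1 = k+1 := rfl
            have hs2 : k+1+1-2 = k := rfl
            rw [hs1, hs2, GBdec n k]
            have hT1 : (X:PS)^(Ee n (k+2)) * (X:PS)^(2*n+1)
                = (X:PS)^(Ee (n+1) (k+2)) * (X:PS)^(2*(k+2)) := by
              apply Ee_pow_eq; push_cast; ring
            have hT2 : (X:PS)^(Ee n (k+1)) = (X:PS)^(Ee (n+1) (k+2)) := by
              apply qpow_eq; apply Ee_eq_of_int; push_cast; ring
            rcases Nat.lt_or_ge (2*n) k with h | h
            · have z0 : GB (2*n) k = 0 := GB_eq_zero h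
              have z1 : GB (2*n) (k+1) = 0 := GB_eq_zero (by omega)
              have z2 : GB (2*n) (k+2) = 0 := GB_eq_zero (by omega)
              rw [z0, z1, z2]
              ring
            · have hT3 : (X:PS)^(Ee n k) * (X:PS)^(2*n+1)
                  = (X:PS)^(Ee (n+1) (k+2)) * (X:PS)^(2*(2*n-k)) := by
                apply Ee_pow_eq
                push_cast [Nat.cast_sub h]
                ring
              linear_combination (GB (2*n) (k+2)) * hT1
                + (1 + (X:PS)^(2*(2*n+1))) * (GB (2*n) (k+1)) * hT2
                + (GB (2*n) k) * hT3

lemma Pn_eq_sum (n : ℕ) :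
    Pn n = ∑ j ∈ Finset.range (2*n+1),
      Polynomial.monomial j (GB (2*n) j * (X:PS)^(Ee n j)) := by
  apply Polynomial.ext; intro j
  rw [Polynomial.finset_sum_coeff]
  simp only [Polynomial.coeff_monomial]
  rw [Finset.sum_ite_eq' (Finset.range (2*n+1)) j (fun i => GB (2*n) i * (X:PS)^(Ee n i)),
    Pn_coeff]
  by_cases hj : j ∈ Finset.range (2*n+1)
  · rw [if_pos hj]
  · rw [if_neg hj, GB_eq_zero (by simp only [Finset.mem_range] at hj; omega), zero_mul]

lemma FJ (n : ℕ) : (∏ k ∈ Finset.range n, (1 - (X:PS)^(2*k+1)))^2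
    = ∑ j ∈ Finset.range (2*n+1), (-1 : PS)^(n+j) * (GB (2*n) j * (X:PS)^(Ee n j)) := by
  have hev := congrArg (Polynomial.eval (-1 : PS)) (Pn_eq_sum n)
  rw [Pn, Polynomial.eval_prod] at hev
  simp only [Polynomial.eval_mul, Polynomial.eval_add, Polynomial.eval_one, Polynomial.eval_C,
    Polynomial.eval_X, Polynomial.eval_finset_sum, Polynomial.eval_monomial] at hev
  have hfac : ∀ k ∈ Finset.range n, ((X:PS)^(2*k+1) + (-1)) * (1 + (X:PS)^(2*k+1) * (-1))
      = (-1) * (1 - (X:PS)^(2*k+1))^2 := fun k _ => by ring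
  rw [Finset.prod_congr rfl hfac, Finset.prod_mul_distrib, Finset.prod_const,
    Finset.card_range] at hev
  have hsq : ∏ k ∈ Finset.range n, (1 - (X:PS)^(2*k+1))^2
      = (∏ k ∈ Finset.range n, (1 - (X:PS)^(2*k+1)))^2 := by
    rw [Finset.prod_pow]
  rw [hsq] at hev
  have h2 := congrArg (fun z => (-1 : PS)^n * z) hev
  rw [← mul_assoc, ← pow_add, Even.neg_one_pow ⟨n, by ring⟩, one_mul, Finset.mul_sum] at h2
  rw [h2]
  refine Finset.sum_congr rfl fun j _ => ?_
  rw [pow_add]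
  ring


open scoped Classical
open PowerSeries Finset

noncomputable def Fodd : PS := seriesProd (fun k => 1 - (X:PS)^(2*k+1))
noncomputable def F2 : PS := seriesProd (fun k => 1 - (X:PS)^(2*k+2))

lemma tail_odd : Tail (fun k => 1 - (X:PS)^(2*k+1)) := fun k => dv_one_sub_pow (by omega)
lemma tail_even : Tail (fun k => 1 - (X:PS)^(2*k+2)) := fun k => dv_one_sub_pow (by omega)
lemma tail_oddsq : Tail (fun k => (1 - (X:PS)^(2*k+1))^2) := tail_odd.pow 2

/-- collapse: for small coefficients, `GB (2n) j * F2` looks like `1`. -/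
lemma collapse {n j M : ℕ} (hj : j ≤ 2*n) (h1 : M < 2*j+2) (h2 : M < 2*(2*n-j+1)) :
    PowerSeries.coeff M (GB (2*n) j * F2) = if M = 0 then 1 else 0 := by
  have c1 : PowerSeries.coeff M (GB (2*n) j * F2) =
      PowerSeries.coeff M (GB (2*n) j * Epoly (j + (M+1))) := by
    rw [F2, coeff_mul_seriesProd _ _ tail_even (m := j + (M+1)) (by omega)]
    rfl
  have c2 : Epoly (j + (M+1)) = Epoly j * ∏ i ∈ Finset.range (M+1), (1 - (X:PS)^(2*(j+i)+2)) := by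
    rw [Epoly, Finset.prod_range_add]
    rfl
  have hT : (X:PS)^(2*j+2) ∣ (∏ i ∈ Finset.range (M+1), (1 - (X:PS)^(2*(j+i)+2))) - 1 :=
    dv_prod_range fun i _ => dv_one_sub_pow (by omega)
  have c4 : (X:PS)^(2*(2*n-j+1)) ∣ (GB (2*n) j * Epoly j) - 1 := by
    rw [GB_mul_E (2*n) j hj]
    exact dv_prod_range fun i _ => dv_one_sub_pow (by omega)
  rw [c1, c2, ← mul_assoc, coeff_mul_drop h1 hT, coeff_eq_of_dvd c4 h2,
    PowerSeries.coeff_one]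

lemma neg_one_pow_C (e : ℕ) : ((-1 : PS))^e = PowerSeries.C (R := ℤ) ((-1)^e) := by
  rw [map_pow, map_neg, map_one]

lemma neg_one_pow_parity {a b : ℕ} (h : a % 2 = b % 2) : ((-1:ℤ))^a = ((-1:ℤ))^b := by
  rcases Nat.even_or_odd a with ha | ha
  · rw [Even.neg_one_pow ha, Even.neg_one_pow (Nat.even_iff.mpr (by
      have := Nat.even_iff.mp ha; omega))]
  · rw [Odd.neg_one_pow ha, Odd.neg_one_pow (Nat.odd_iff.mpr (by
      have := Nat.odd_iff.mp ha; omega))]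

theorem gauss : Fodd^2 * F2 = phiNeg := by
  ext N
  set n := N + 1 with hn
  -- step 1: truncate Fodd^2
  have hsq : Fodd^2 = seriesProd (fun k => (1 - (X:PS)^(2*k+1))^2) :=
    (seriesProd_pow _ tail_odd 2).symm
  have step1 : PowerSeries.coeff N (Fodd^2 * F2) =
      PowerSeries.coeff N ((∏ k ∈ Finset.range n, (1 - (X:PS)^(2*k+1)))^2 * F2) := by
    rw [hsq, mul_comm, coeff_mul_seriesProd _ _ tail_oddsq (m := n) (by omega), mul_comm,
      Finset.prod_pow]
  rw [step1, FJ n, Finset.sum_mul, map_sum]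
  -- per term evaluation
  have hterm : ∀ j ∈ Finset.range (2*n+1),
      PowerSeries.coeff N (((-1:PS))^(n+j) * (GB (2*n) j * (X:PS)^(Ee n j)) * F2)
        = if Ee n j = N then ((-1:ℤ))^(n+j) else 0 := by
    intro j hj
    rw [Finset.mem_range] at hj
    have hrearr : ((-1:PS))^(n+j) * (GB (2*n) j * (X:PS)^(Ee n j)) * F2
        = PowerSeries.C (R := ℤ) ((-1)^(n+j)) * ((X:PS)^(Ee n j) * (GB (2*n) j * F2)) := by
      rw [← neg_one_pow_C]; ring
    rw [hrearr, PowerSeries.coeff_C_mul, PowerSeries.coeff_X_pow_mul']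
    by_cases hEN : Ee n j ≤ N
    · rw [if_pos hEN]
      -- bounds for collapse
      have hcast : (Ee n j : ℤ) = ((j:ℤ) - n)^2 := Ee_cast n j
      have hnz : (n:ℤ) = (N:ℤ) + 1 := by exact_mod_cast congrArg (Nat.cast : ℕ → ℤ) hn
      have hb1 : N < Ee n j + 2*j + 2 := by
        have : (N:ℤ) < (Ee n j : ℤ) + 2*j + 2 := by
          rw [hcast]; nlinarith [sq_nonneg ((j:ℤ) - n + 1), hnz]
        exact_mod_cast this
      have hb2 : N < Ee n j + 2*(2*n-j+1) := by
        have hsub : ((2*n - j : ℕ) : ℤ) = 2*(n:ℤ) - j := by omega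
        have : (N:ℤ) < (Ee n j : ℤ) + 2*((2*n-j:ℕ) + 1 : ℕ) := by
          push_cast [hsub, hcast]
          nlinarith [sq_nonneg ((j:ℤ) - n - 1), hnz]
        exact_mod_cast this
      rw [collapse (by omega) (by omega) (by omega)]
      by_cases hE : Ee n j = N
      · rw [if_pos (by omega : N - Ee n j = 0), if_pos hE, mul_one]
      · rw [if_neg (by omega : ¬ N - Ee n j = 0), if_neg hE, mul_zero]
    · rw [if_neg hEN, if_neg (by omega : ¬ Ee n j = N), mul_zero]
  rw [Finset.sum_congr rfl hterm]
  -- now evaluate the indicator sum against phiNeg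
  rw [phiNeg, PowerSeries.coeff_mk]
  by_cases hN0 : N = 0
  · subst hN0
    rw [if_pos rfl]
    rw [Finset.sum_eq_single n]
    · rw [if_pos (by simp [Ee]), Even.neg_one_pow ⟨n, by ring⟩]
    · intro j hjr hjn
      rw [if_neg]
      intro hE
      apply hjn
      have : ((j:ℤ) - n)^2 = 0 := by rw [← Ee_cast, hE]; simp
      have := pow_eq_zero_iff (n := 2) (by omega) |>.mp this
      omega
    · intro hmem
      exact absurd (Finset.mem_range.mpr (by omega)) hmem
  · rw [if_neg hN0]
    by_cases hsqN : ∃ k : ℕ, 0 < k ∧ N = k^2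
    · obtain ⟨k, hk0, hkN⟩ := hsqN
      rw [if_pos ⟨k, hk0, hkN⟩]
      have hkn : k < n := by nlinarith
      -- sum over two points n-k and n+k
      have hsum : ∑ j ∈ Finset.range (2*n+1), (if Ee n j = N then ((-1:ℤ))^(n+j) else 0)
          = ∑ j ∈ ({n-k, n+k} : Finset ℕ), (if Ee n j = N then ((-1:ℤ))^(n+j) else 0) := by
        symm
        apply Finset.sum_subset
        · intro j hjmem
          simp only [Finset.mem_insert, Finset.mem_singleton] at hjmem
          rw [Finset.mem_range]
          omega
        · intro j hjr hjne
          simp only [Finset.mem_insert, Finset.mem_singleton, not_or] at hjne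
          rw [if_neg]
          intro hE
          have hnb : ((j:ℤ) - n).natAbs = k := by
            have h3 : (((j:ℤ) - n).natAbs)^2 = k^2 := by
              have h4 : Ee n j = k^2 := by rw [hE, hkN]
              simpa [Ee] using h4
            exact Nat.pow_left_injective (by norm_num) h3
          omega
      rw [hsum, Finset.sum_insert (by simp; omega), Finset.sum_singleton]
      have hE1 : Ee n (n-k) = N := by
        rw [hkN]
        have : (Ee n (n-k) : ℤ) = ((k:ℤ))^2 := by
          rw [Ee_cast]
          have : ((n-k : ℕ):ℤ) = (n:ℤ) - k := by omega
          rw [this]; ring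
        exact_mod_cast this
      have hE2 : Ee n (n+k) = N := by
        rw [hkN]
        have : (Ee n (n+k) : ℤ) = ((k:ℤ))^2 := by
          rw [Ee_cast]; push_cast; ring
        exact_mod_cast this
      rw [if_pos hE1, if_pos hE2]
      have hp1 : ((-1:ℤ))^(n+(n-k)) = ((-1:ℤ))^k := neg_one_pow_parity (by omega)
      have hp2 : ((-1:ℤ))^(n+(n+k)) = ((-1:ℤ))^k := neg_one_pow_parity (by omega)
      have hmodk : k^2 % 2 = k % 2 := by
        have hpm := Nat.pow_mod k 2 2
        have h01 : k % 2 = 0 ∨ k % 2 = 1 := by omega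
        rcases h01 with h | h <;> rw [h] at hpm <;> simp at hpm <;> omega
      have hpN : ((-1:ℤ))^N = ((-1:ℤ))^k := neg_one_pow_parity (by rw [hkN]; omega)
      rw [hp1, hp2, hpN]
      ring
    · rw [if_neg hsqN]
      apply Finset.sum_eq_zero
      intro j hjr
      rw [if_neg]
      intro hE
      apply hsqN
      refine ⟨((j:ℤ) - n).natAbs, ?_, ?_⟩
      · by_contra h0
        have : ((j:ℤ) - n).natAbs = 0 := by omega
        have : Ee n j = 0 := by rw [Ee, this]; rfl
        omega
      · rw [← hE, Ee]


open scoped Classical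
open PowerSeries Finset

noncomputable def Ifac (k : ℕ) : PS := PowerSeries.invOfUnit (1 - (X:PS)^(k+1)) 1

lemma Ifac_mul (k : ℕ) : (1 - (X:PS)^(k+1)) * Ifac k = 1 := by
  apply PowerSeries.mul_invOfUnit
  simp

lemma tail_I : Tail Ifac := by
  intro k
  refine ⟨Ifac k, ?_⟩
  linear_combination Ifac_mul k

noncomputable def Gs : PS := seriesProd (fun k => (1 - (X:PS)^(2*k+2)) * (Ifac k)^2)

lemma tail_gfac : Tail (fun k => (1 - (X:PS)^(2*k+2)) * (Ifac k)^2) :=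
  fun k => dv_mul (dv_one_sub_pow (by omega)) (dv_pow (tail_I k) 2)

lemma overGF_eq (t : ℕ) : overGF t = Gs ^ t := by
  rw [overGF]
  have hfac : (fun k => (1 - (X:PS) ^ (2 * (k + 1))) ^ t *
      (PowerSeries.invOfUnit (1 - (X:PS) ^ (k + 1)) 1) ^ (2 * t))
      = fun k => ((1 - (X:PS)^(2*k+2)) * (Ifac k)^2)^t := by
    funext k
    rw [show 2*(k+1) = 2*k+2 by ring, Ifac, mul_pow, ← pow_mul]
  rw [hfac, seriesProd_pow _ tail_gfac t, Gs]

lemma G_phiNeg : Gs * phiNeg = 1 := by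
  rw [← gauss]
  have e1 : Gs * (Fodd^2 * F2) = ((Gs * Fodd) * Fodd) * F2 := by ring
  rw [e1, Gs, Fodd, F2]
  rw [seriesProd_mul _ _ tail_gfac tail_odd,
    seriesProd_mul _ _ (tail_gfac.mul tail_odd) tail_odd,
    seriesProd_mul _ _ ((tail_gfac.mul tail_odd).mul tail_odd) tail_even]
  have hw : (fun k => (1 - (X:PS)^(2*k+2)) * Ifac k^2 * (1 - (X:PS)^(2*k+1))
        * (1 - (X:PS)^(2*k+1)) * (1 - (X:PS)^(2*k+2)))
      = fun k => ((1 - (X:PS)^(2*k+1)) * (1 - (X:PS)^(2*k+2)) * Ifac k)^2 := by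
    funext k; ring
  rw [hw]
  have tail_w : Tail (fun k => (1 - (X:PS)^(2*k+1)) * (1 - (X:PS)^(2*k+2)) * Ifac k) :=
    fun k => dv_mul (dv_mul (dv_one_sub_pow (by omega)) (dv_one_sub_pow (by omega))) (tail_I k)
  rw [seriesProd_pow _ tail_w 2]
  have tail_u : Tail (fun j => 1 - (X:PS)^(j+1)) := fun j => dv_one_sub_pow (by omega)
  have hpair : seriesProd (fun k => (1 - (X:PS)^(2*k+1)) * (1 - (X:PS)^(2*k+2)))
      = seriesProd (fun j => 1 - (X:PS)^(j+1)) := by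
    have := seriesProd_pair (fun j => 1 - (X:PS)^(j+1)) tail_u
    rw [← this]
  have hsplit : seriesProd (fun k => (1 - (X:PS)^(2*k+1)) * (1 - (X:PS)^(2*k+2)) * Ifac k)
      = seriesProd (fun k => (1 - (X:PS)^(2*k+1)) * (1 - (X:PS)^(2*k+2))) * seriesProd Ifac := by
    rw [seriesProd_mul _ _ (fun k => dv_mul (dv_one_sub_pow (by omega)) (dv_one_sub_pow (by omega))) tail_I]
  rw [hsplit, hpair, seriesProd_mul _ _ tail_u tail_I]
  have hone : (fun k => (1 - (X:PS)^(k+1)) * Ifac k) = fun _ => (1:PS) := by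
    funext k; exact Ifac_mul k
  rw [hone, seriesProd_one, one_pow]

noncomputable def Bser : PS :=
  PowerSeries.mk fun m => if m = 0 then 0 else if ∃ k : ℕ, 0 < k ∧ m = k ^ 2 then (-1)^m else 0

lemma two_C : (2 : PS) = PowerSeries.C (R := ℤ) 2 := (map_ofNat (PowerSeries.C (R := ℤ)) 2).symm
lemma four_C : (4 : PS) = PowerSeries.C (R := ℤ) 4 := (map_ofNat (PowerSeries.C (R := ℤ)) 4).symm
lemma eight_C : (8 : PS) = PowerSeries.C (R := ℤ) 8 := (map_ofNat (PowerSeries.C (R := ℤ)) 8).symm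

lemma phiNeg_eq : phiNeg = 1 + 2 * Bser := by
  ext N
  rw [map_add, two_C, PowerSeries.coeff_C_mul, phiNeg, Bser, PowerSeries.coeff_mk,
    PowerSeries.coeff_mk, PowerSeries.coeff_one]
  by_cases h0 : N = 0
  · rw [if_pos h0, if_pos h0, if_pos h0]; ring
  · rw [if_neg h0, if_neg h0, if_neg h0]
    by_cases hs : ∃ k : ℕ, 0 < k ∧ N = k ^ 2
    · rw [if_pos hs, if_pos hs]; ring
    · rw [if_neg hs, if_neg hs]; ring

lemma pow_form (Cc R : PS) : ∀ s : ℕ, ∃ W : PS,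
    (1 + 4*Cc + 8*R)^s = 1 + 4*(s:PS)*Cc + 8*W := by
  intro s
  induction s with
  | zero => exact ⟨0, by push_cast; ring⟩
  | succ s ih =>
      obtain ⟨W, hW⟩ := ih
      refine ⟨R + 2*(s:PS)*Cc^2 + 4*(s:PS)*Cc*R + W + 4*W*Cc + 8*W*R, ?_⟩
      rw [pow_succ, hW]
      push_cast
      ring

lemma main_congruence (t s : ℕ) (hts : t = 2*s+1) : ∃ Z : PS,
    Gs^t = 1 - 2*Bser + 4*Bser^2 + 4*(s:PS)*(Bser^2 - Bser) + 8*Z := by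
  have h0 : Gs * (1 + 2*Bser) = 1 := by rw [← phiNeg_eq]; exact G_phiNeg
  have hG : Gs = 1 - 2*(Bser*Gs) := by linear_combination h0
  have s1 : Gs^2 = 1 - 2*(Bser*Gs) - 2*(Bser*Gs^2) := by
    linear_combination (Gs + 1) * hG
  have u1 : Bser*Gs = Bser - 2*(Bser^2*Gs) := by linear_combination Bser * hG
  have u2 : Bser*Gs^2 = Bser - 2*(Bser^2*Gs) - 2*(Bser^2*Gs^2) := by
    linear_combination Bser * s1
  have u3 : Bser^2*Gs^2 = Bser^2 - 4*(Bser^3*Gs) + 4*(Bser^4*Gs^2) := by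
    linear_combination Bser^2*(Gs + 1 - 2*(Bser*Gs)) * hG
  have s2 : Gs^2 = 1 - 4*Bser + 4*Bser^2
      + 8*(Bser^2*Gs - 2*(Bser^3*Gs) + 2*(Bser^4*Gs^2)) := by
    linear_combination s1 - 2*u1 - 2*u2 + 4*u3
  have hG3 : Gs = 1 - 2*Bser + 4*Bser^2 - 8*(Bser^3*Gs) := by
    linear_combination (1 - 2*Bser + 4*Bser^2) * hG
  obtain ⟨W, hW⟩ := pow_form (Bser^2 - Bser) (Bser^2*Gs - 2*(Bser^3*Gs) + 2*(Bser^4*Gs^2)) s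
  have hpow : (Gs^2)^s = 1 + 4*(s:PS)*(Bser^2 - Bser) + 8*W := by
    rw [← hW]
    congr 1
    linear_combination s2
  have h1 : Gs^t = (Gs^2)^s * Gs := by
    rw [hts, pow_succ, ← pow_mul]
  refine ⟨-(Bser^3*Gs) - (s:PS)*(Bser^2-Bser)*Bser + 2*((s:PS)*(Bser^2-Bser)*Bser^2)
    - 4*((s:PS)*(Bser^2-Bser)*Bser^3*Gs) + W - 2*(W*Bser) + 4*(W*Bser^2)
    - 8*(W*Bser^3*Gs), ?_⟩
  rw [h1, hpow]
  linear_combination (1 + 4*(s:PS)*(Bser^2-Bser) + 8*W) * hG3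

lemma not_sq (n k : ℕ) : 8*n+5 ≠ k^2 := by
  intro h
  obtain ⟨q, r, hr, rfl⟩ : ∃ q r, r < 8 ∧ k = 8*q + r :=
    ⟨k/8, k%8, Nat.mod_lt _ (by norm_num), (Nat.div_add_mod k 8).symm⟩
  have hexp : (8*q+r)^2 = 64*(q*q) + 16*q*r + r*r := by ring
  rw [hexp] at h
  generalize q*q = Q at h
  interval_cases r <;> omega

lemma coeff_Bsq_even {N : ℕ} (hodd : N % 2 = 1) : (2:ℤ) ∣ PowerSeries.coeff N (Bser^2) := by
  have hcast : ((PowerSeries.coeff N (Bser^2) : ℤ) : ZMod 2) = 0 := by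
    rw [pow_two, PowerSeries.coeff_mul, Int.cast_sum]
    apply Finset.sum_involution (fun p _ => (p.2, p.1))
    · intro p hp
      have hne : p.1 ≠ p.2 := by
        rw [Finset.HasAntidiagonal.mem_antidiagonal] at hp
        omega
      show ((PowerSeries.coeff p.1 Bser * PowerSeries.coeff p.2 Bser : ℤ) : ZMod 2)
        + ((PowerSeries.coeff p.2 Bser * PowerSeries.coeff p.1 Bser : ℤ) : ZMod 2) = 0
      rw [mul_comm (PowerSeries.coeff p.2 Bser)]
      exact CharTwo.add_self_eq_zero _
    · intro p hp _
      rw [Finset.HasAntidiagonal.mem_antidiagonal] at hp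
      intro heq
      have : p.2 = p.1 := congrArg Prod.fst heq
      omega
    · intro p hp
      rw [Finset.HasAntidiagonal.mem_antidiagonal] at hp ⊢
      omega
    · intro p hp
      rfl
  exact (ZMod.intCast_zmod_eq_zero_iff_dvd _ 2).mp hcast


/-- For all `n ≥ 0` and all odd `t ≥ 1`, `p̄_{-t}(8n+5) ≡ 0 (mod 8)`. -/
theorem pbar_eight_n_add_5 (t : ℕ) (ht1 : 1 ≤ t) (ht : Odd t) (n : ℕ) :
    (8 : ℤ) ∣ pbar t (8 * n + 5) := by
  obtain ⟨s, hs⟩ := ht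
  obtain ⟨Z, hZ⟩ := main_congruence t s hs
  have hB0 : PowerSeries.coeff (8*n+5) Bser = 0 := by
    rw [Bser, PowerSeries.coeff_mk, if_neg (by omega : ¬ 8*n+5 = 0), if_neg]
    rintro ⟨k, -, hk⟩
    exact not_sq n k hk
  obtain ⟨m, hm⟩ := coeff_Bsq_even (N := 8*n+5) (by omega)
  rw [pbar, overGF_eq, hZ]
  have e1 : (1 : PS) - 2*Bser + 4*Bser^2 + 4*(s:PS)*(Bser^2 - Bser) + 8*Z
      = 1 + PowerSeries.C (R := ℤ) (-2) * Bser + PowerSeries.C (R := ℤ) 4 * Bser^2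
        + PowerSeries.C (R := ℤ) (4*(s:ℤ)) * (Bser^2 - Bser) + PowerSeries.C (R := ℤ) 8 * Z := by
    rw [eq_intCast (PowerSeries.C (R := ℤ)), eq_intCast (PowerSeries.C (R := ℤ)),
      eq_intCast (PowerSeries.C (R := ℤ)), eq_intCast (PowerSeries.C (R := ℤ))]
    push_cast
    ring
  rw [e1]
  simp only [map_add, PowerSeries.coeff_C_mul, PowerSeries.coeff_one]
  rw [hB0, map_sub, hB0, hm, if_neg (by omega : ¬ 8*n+5 = 0)]
  exact ⟨(s:ℤ)*m + m + PowerSeries.coeff (8*n+5) Z, by push_cast; ring⟩
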